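/- Let A₀ be a symmetric positive definite N×N matrix, B a symmetric N×N matrix, and Π an invertible matrix such that Π⁻¹BΠ = diag(Λ₊, 0, Λ₋) with Λ₊ ∈ ℝ^{p×p} diagonal with positive entries and Λ₋ ∈ ℝ^{n×n} diagonal with negative entries, and suppose A₀B is symmetric. Then ΠᵀA₀Π is block diagonal: ΠᵀA₀Π = diag(X₊, X₀, X₋) with X₊, X₀, X₋ symmetric positive definite of sizes p, N−p−n, n respectively. -/

import Mathlib

open Matrix

section helpers

variable {α β : Type*} [Fintype α] [Fintype β]

lemma posDef_submatrix_inl {M : Matrix (α ⊕ β) (α ⊕ β) ℝ} (hM : M.PosDef) :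
    (M.submatrix Sum.inl Sum.inl).PosDef := by
  refine Matrix.PosDef.of_dotProduct_mulVec_pos (hM.1.submatrix Sum.inl) fun x hx => ?_
  have hy : Sum.elim x (0 : β → ℝ) ≠ 0 := by
    intro h; exact hx (funext fun i => congrFun h (Sum.inl i))
  have h := hM.dotProduct_mulVec_pos hy
  rw [← Matrix.fromBlocks_toBlocks M, Matrix.fromBlocks_mulVec] at h
  simp [sumElim_dotProduct_sumElim, Matrix.toBlocks₁₁] at h
  exact h

lemma posDef_submatrix_inr {M : Matrix (α ⊕ β) (α ⊕ β) ℝ} (hM : M.PosDef) :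
    (M.submatrix Sum.inr Sum.inr).PosDef := by
  refine Matrix.PosDef.of_dotProduct_mulVec_pos (hM.1.submatrix Sum.inr) fun x hx => ?_
  have hy : Sum.elim (0 : α → ℝ) x ≠ 0 := by
    intro h; exact hx (funext fun i => congrFun h (Sum.inr i))
  have h := hM.dotProduct_mulVec_pos hy
  rw [← Matrix.fromBlocks_toBlocks M, Matrix.fromBlocks_mulVec] at h
  simp [sumElim_dotProduct_sumElim, Matrix.toBlocks₂₂] at h
  exact h

end helpers

/-- Lemma 2.1 of the appendix: if `A₀` is symmetric positive definite, `A₀ B` is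
symmetric, and `Pm` diagonalizes the symmetric boundary matrix `B` as
`Pm⁻¹ B Pm = diag(Λ₊, 0, Λ₋)` with `Λ₊` diagonal positive and `Λ₋` diagonal negative,
then `Pmᵀ A₀ Pm` is block diagonal with symmetric positive definite blocks. -/
theorem symmetrizer_block_diagonal (p m n : ℕ)
    (A₀ B Pm : Matrix (Fin p ⊕ (Fin m ⊕ Fin n)) (Fin p ⊕ (Fin m ⊕ Fin n)) ℝ)
    (hA₀ : A₀.PosDef) (hB : B.IsSymm) (hA₀B : (A₀ * B).IsSymm)
    (hPm : IsUnit Pm.det)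
    (dp : Fin p → ℝ) (hdp : ∀ i, 0 < dp i)
    (dn : Fin n → ℝ) (hdn : ∀ i, dn i < 0)
    (hdiag : Pm⁻¹ * B * Pm
      = Matrix.fromBlocks (Matrix.diagonal dp) 0 0
          (Matrix.fromBlocks (0 : Matrix (Fin m) (Fin m) ℝ) 0 0 (Matrix.diagonal dn))) :
    ∃ (Xp : Matrix (Fin p) (Fin p) ℝ) (X0 : Matrix (Fin m) (Fin m) ℝ)
      (Xn : Matrix (Fin n) (Fin n) ℝ),
      Xp.PosDef ∧ X0.PosDef ∧ Xn.PosDef ∧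
      Pmᵀ * A₀ * Pm = Matrix.fromBlocks Xp 0 0 (Matrix.fromBlocks X0 0 0 Xn) := by
  set M : Matrix (Fin p ⊕ (Fin m ⊕ Fin n)) (Fin p ⊕ (Fin m ⊕ Fin n)) ℝ := Pmᵀ * A₀ * Pm with hMdef
  have hA₀symm : A₀ᵀ = A₀ := by
    have := hA₀.1.eq
    rwa [Matrix.conjTranspose_eq_transpose_of_trivial] at this
  -- `M` is positive definite
  have hMpd : M.PosDef := by
    refine Matrix.PosDef.of_dotProduct_mulVec_pos ?_ ?_
    · rw [Matrix.IsHermitian, Matrix.conjTranspose_eq_transpose_of_trivial]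
      rw [hMdef, Matrix.transpose_mul, Matrix.transpose_mul, Matrix.transpose_transpose,
        hA₀symm, Matrix.mul_assoc]
    · intro x hx
      have hPmunit : IsUnit Pm := (Matrix.isUnit_iff_isUnit_det _).2 hPm
      have hinj : Function.Injective Pm.mulVec :=
        (Matrix.mulVec_injective_iff_isUnit).2 hPmunit
      have hPx : Pm *ᵥ x ≠ 0 := by
        intro h
        exact hx (hinj (by simpa using h))
      have := hA₀.dotProduct_mulVec_pos hPx
      have hrw : M *ᵥ x = Pmᵀ *ᵥ (A₀ *ᵥ (Pm *ᵥ x)) := by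
        rw [hMdef, ← Matrix.mulVec_mulVec, ← Matrix.mulVec_mulVec]
      rw [hrw, Matrix.dotProduct_mulVec, Matrix.vecMul_transpose]
      simpa using this
  have hMsymm : Mᵀ = M := by
    rw [hMdef, Matrix.transpose_mul, Matrix.transpose_mul, Matrix.transpose_transpose,
      hA₀symm, Matrix.mul_assoc]
  -- the diagonal matrix
  set d : Fin p ⊕ (Fin m ⊕ Fin n) → ℝ :=
    Sum.elim dp (Sum.elim (fun _ => 0) dn) with hddef
  have hD : Pm⁻¹ * B * Pm = Matrix.diagonal d := by
    rw [hdiag, hddef]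
    rw [show (0 : Matrix (Fin m) (Fin m) ℝ) = Matrix.diagonal (fun _ => (0 : ℝ)) by
      simp, Matrix.fromBlocks_diagonal, Matrix.fromBlocks_diagonal]
  have hPinv : Pm * Pm⁻¹ = 1 := Matrix.mul_nonsing_inv Pm hPm
  -- M * D = Pmᵀ (A₀ B) Pm
  have h1 : M * Matrix.diagonal d = Pmᵀ * (A₀ * B) * Pm := by
    rw [← hD, hMdef]
    calc Pmᵀ * A₀ * Pm * (Pm⁻¹ * B * Pm)
        = Pmᵀ * A₀ * (Pm * Pm⁻¹) * B * Pm := by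
          simp only [Matrix.mul_assoc]
      _ = Pmᵀ * (A₀ * B) * Pm := by
          rw [hPinv, Matrix.mul_one]; simp only [Matrix.mul_assoc]
  -- commutation
  have comm : Matrix.diagonal d * M = M * Matrix.diagonal d := by
    calc Matrix.diagonal d * M
        = (M * Matrix.diagonal d)ᵀ := by
          rw [Matrix.transpose_mul, Matrix.diagonal_transpose, hMsymm]
      _ = (Pmᵀ * (A₀ * B) * Pm)ᵀ := by rw [h1]
      _ = Pmᵀ * ((A₀ * B)ᵀ * Pm) := by
          rw [Matrix.transpose_mul, Matrix.transpose_mul, Matrix.transpose_transpose]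
      _ = Pmᵀ * (A₀ * B) * Pm := by rw [hA₀B.eq]; simp only [Matrix.mul_assoc]
      _ = M * Matrix.diagonal d := h1.symm
  -- vanishing of off-diagonal blocks
  have key : ∀ i j, d i ≠ d j → M i j = 0 := by
    intro i j hne
    have h := congrFun (congrFun comm i) j
    rw [Matrix.diagonal_mul, Matrix.mul_diagonal] at h
    have h2 : (d i - d j) * M i j = 0 := by linear_combination h
    rcases mul_eq_zero.mp h2 with h3 | h3
    · exact absurd (sub_eq_zero.mp h3) hne
    · exact h3
  refine ⟨M.submatrix Sum.inl Sum.inl,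
    (M.submatrix Sum.inr Sum.inr).submatrix Sum.inl Sum.inl,
    (M.submatrix Sum.inr Sum.inr).submatrix Sum.inr Sum.inr,
    posDef_submatrix_inl hMpd,
    posDef_submatrix_inl (posDef_submatrix_inr hMpd),
    posDef_submatrix_inr (posDef_submatrix_inr hMpd), ?_⟩
  ext i j
  rcases i with a | b
  · rcases j with a' | b'
    · simp [Matrix.fromBlocks]
    · rcases b' with b' | c'
      · simpa [Matrix.fromBlocks] using
          key (Sum.inl a) (Sum.inr (Sum.inl b')) (by simpa [hddef] using (hdp a).ne')
      · simpa [Matrix.fromBlocks] using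
          key (Sum.inl a) (Sum.inr (Sum.inr c'))
            (by simpa [hddef] using (lt_trans (hdn c') (hdp a)).ne')
  · rcases b with b | c
    · rcases j with a' | b'
      · simpa [Matrix.fromBlocks] using
          key (Sum.inr (Sum.inl b)) (Sum.inl a') (by simpa [hddef] using (hdp a').ne)
      · rcases b' with b' | c'
        · simp [Matrix.fromBlocks]
        · simpa [Matrix.fromBlocks] using
            key (Sum.inr (Sum.inl b)) (Sum.inr (Sum.inr c'))
              (by simpa [hddef] using (hdn c').ne')
    · rcases j with a' | b'
      · simpa [Matrix.fromBlocks] using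
          key (Sum.inr (Sum.inr c)) (Sum.inl a')
            (by simpa [hddef] using (lt_trans (hdn c) (hdp a')).ne)
      · rcases b' with b' | c'
        · simpa [Matrix.fromBlocks] using
            key (Sum.inr (Sum.inr c)) (Sum.inr (Sum.inl b'))
              (by simpa [hddef] using (hdn c).ne)
        · simp [Matrix.fromBlocks]
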